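/- arXiv:1007.4502 — 3 statements merged into one kernel-verified Lean document; each statement's English description precedes it below -/
import Mathlib

section
/- Let (K, v) be a differential field of characteristic zero containing ℂ with v vanishing on ℂ, let k ⊆ K be a subfield with v(k) ⊆ k, and let F ⊆ k be a subfield containing ℂ with v(F) ⊆ F. Let n ≥ 1, let G be a subgroup of GL_n(ℂ), and let G̃ be the subgroup of GL_n(ℂ) generated by G together with the scalar matrices ζ·1 with ζⁿ = 1. Let y = (y^i_j) ∈ GL_n(K) satisfy v(y^i_j) = Σ_l A^i_l y^l_j for a matrix A = (A^i_j) ∈ M_n(k), and assume that Q(y) ∈ F for every G̃-invariant polynomial Q ∈ ℂ[X^i_j]. Then there exists a matrix B = (B^i_j) ∈ M_n(F) such that for every G̃-invariant polynomial P ∈ ℂ[X^i_j] one has Σ_{ι,λ} ( Σ_κ (∂P/∂X^ι_κ)(y) · y^λ_κ ) · (A^ι_λ − B^ι_λ) = 0. -/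
open MvPolynomial Matrix

/-- Right translation action of a matrix `g` on `ℂ[X^i_j]`:
`X^i_j ↦ ∑ l, X^i_l g^l_j`. -/
noncomputable def rightTranslate {n : ℕ} (g : Matrix (Fin n) (Fin n) ℂ) :
    MvPolynomial (Fin n × Fin n) ℂ →ₐ[ℂ] MvPolynomial (Fin n × Fin n) ℂ :=
  aeval (fun p : Fin n × Fin n => ∑ l, X (p.1, l) * C (g l p.2))

/-- A polynomial is invariant under a subgroup `S ⊆ GL_n(ℂ)` if it is fixed by
right translation by every element of `S`. -/
def RTInvariant {n : ℕ} (S : Subgroup (GL (Fin n) ℂ))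
    (P : MvPolynomial (Fin n × Fin n) ℂ) : Prop :=
  ∀ g ∈ S, rightTranslate ((g : GL (Fin n) ℂ) : Matrix (Fin n) (Fin n) ℂ) P = P

/-- The subgroup generated by `G` together with the scalar matrices `ζ·1` with `ζ^n = 1`. -/
def Gtilde {n : ℕ} (G : Subgroup (GL (Fin n) ℂ)) : Subgroup (GL (Fin n) ℂ) :=
  Subgroup.closure ((G : Set (GL (Fin n) ℂ)) ∪
    {g : GL (Fin n) ℂ | ∃ ζ : ℂ, ζ ^ n = 1 ∧
      ((g : GL (Fin n) ℂ) : Matrix (Fin n) (Fin n) ℂ) = ζ • (1 : Matrix (Fin n) (Fin n) ℂ)})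

/-- Chain rule for a derivation evaluated on a polynomial. -/
lemma chainRule {K : Type*} [Field K] [Algebra ℂ K] (v : K → K)
    (hv_add : ∀ a b : K, v (a + b) = v a + v b)
    (hv_mul : ∀ a b : K, v (a * b) = v a * b + a * v b)
    (hvC : ∀ c : ℂ, v (algebraMap ℂ K c) = 0)
    {σ : Type*} [Fintype σ] [DecidableEq σ] (y : σ → K)
    (P : MvPolynomial σ ℂ) :
    v (aeval y P) = ∑ i, aeval y (pderiv i P) * v (y i) := by
  induction P using MvPolynomial.induction_on with
  | C a => simp [pderiv_C, hvC a]
  | add p q hp hq => simp [hv_add, hp, hq, ← Finset.sum_add_distrib, add_mul]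
  | mul_X p j hp =>
    rw [_root_.map_mul, aeval_X, hv_mul, hp]
    have key : ∀ i : σ, aeval y (pderiv i (p * X j)) * v (y i)
        = aeval y (pderiv i p) * v (y i) * y j
          + (if j = i then aeval y p * v (y i) else 0) := by
      intro i
      rw [pderiv_mul, map_add, _root_.map_mul, _root_.map_mul, aeval_X, pderiv_X,
        Pi.single_apply]
      by_cases h : j = i
      · subst h; simp; ring
      · simp [h]; ring
    rw [Finset.sum_congr rfl fun i _ => key i, Finset.sum_add_distrib,
      Finset.sum_ite_eq Finset.univ j fun i => aeval y p * v (y i)]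
    simp [Finset.sum_mul]

/-- The operator `P ↦ ∑ κ, ∂P/∂X^ι_κ · X^λ_κ`. -/
noncomputable def Dop {n : ℕ} (ι lam : Fin n) (P : MvPolynomial (Fin n × Fin n) ℂ) :
    MvPolynomial (Fin n × Fin n) ℂ := ∑ κ, pderiv (ι, κ) P * X (lam, κ)

lemma Dop_C {n : ℕ} (ι lam : Fin n) (a : ℂ) : Dop ι lam (C a) = 0 := by
  simp [Dop, pderiv_C]

lemma Dop_add {n : ℕ} (ι lam : Fin n) (p q : MvPolynomial (Fin n × Fin n) ℂ) :
    Dop ι lam (p + q) = Dop ι lam p + Dop ι lam q := by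
  simp [Dop, ← Finset.sum_add_distrib, add_mul]

lemma Dop_mul {n : ℕ} (ι lam : Fin n) (p q : MvPolynomial (Fin n × Fin n) ℂ) :
    Dop ι lam (p * q) = Dop ι lam p * q + p * Dop ι lam q := by
  simp only [Dop, pderiv_mul, add_mul, Finset.sum_add_distrib, Finset.sum_mul, Finset.mul_sum]
  refine congrArg₂ (· + ·) ?_ ?_
  · exact Finset.sum_congr rfl fun κ _ => by ring
  · exact Finset.sum_congr rfl fun κ _ => by ring

lemma Dop_X {n : ℕ} (ι lam : Fin n) (q : Fin n × Fin n) :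
    Dop ι lam (X q) = if q.1 = ι then X (lam, q.2) else 0 := by
  obtain ⟨a, b⟩ := q
  simp only [Dop]
  by_cases h : a = ι
  · subst h
    rw [Finset.sum_eq_single b]
    · simp
    · intro κ _ hκ; rw [pderiv_X_of_ne (by simp [hκ.symm])]; ring
    · simp
  · rw [Finset.sum_eq_zero fun κ _ => ?_]
    · simp [h]
    · rw [pderiv_X_of_ne (by simp [h])]; ring

lemma Dop_zero {n : ℕ} (ι lam : Fin n) : Dop ι lam 0 = 0 := by
  simpa using Dop_C ι lam 0

lemma Dop_sum {n : ℕ} (ι lam : Fin n) {α : Type*} (s : Finset α)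
    (f : α → MvPolynomial (Fin n × Fin n) ℂ) :
    Dop ι lam (∑ a ∈ s, f a) = ∑ a ∈ s, Dop ι lam (f a) := by
  induction s using Finset.cons_induction with
  | empty => simp [Dop_zero]
  | cons a s ha ih => rw [Finset.sum_cons, Dop_add, ih, Finset.sum_cons]

/-- The operator `Dop` commutes with right translation. -/
lemma rt_Dop_comm {n : ℕ} (g : Matrix (Fin n) (Fin n) ℂ) (ι lam : Fin n)
    (P : MvPolynomial (Fin n × Fin n) ℂ) :
    rightTranslate g (Dop ι lam P) = Dop ι lam (rightTranslate g P) := by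
  induction P using MvPolynomial.induction_on with
  | C a => simp [Dop_C, rightTranslate, Dop_C]
  | add p q hp hq => rw [Dop_add, map_add, map_add, Dop_add, hp, hq]
  | mul_X p q hp =>
    rw [Dop_mul, map_add, _root_.map_mul, _root_.map_mul, _root_.map_mul, Dop_mul, hp]
    congr 1
    refine congrArg (rightTranslate g p * ·) ?_
    obtain ⟨a, b⟩ := q
    rw [Dop_X]
    have hrt : rightTranslate g (X (a, b)) = ∑ l, X (a, l) * C (g l b) := by
      simp [rightTranslate]
    rw [hrt, Dop_sum]
    have step : ∀ l : Fin n, Dop ι lam (X (a, l) * C (g l b))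
        = (if a = ι then X (lam, l) else 0) * C (g l b) := by
      intro l
      rw [Dop_mul, Dop_C, Dop_X, mul_zero, add_zero]
    rw [Finset.sum_congr rfl fun l _ => step l]
    by_cases h : a = ι
    · simp only [h, if_pos rfl]
      simp [rightTranslate]
    · simp [h]

/-- Pairing with the matrix `A`, as an `F`-linear map. -/
noncomputable def pairA {K : Type*} [Field K] (F : Subfield K) {n : ℕ}
    (A : Matrix (Fin n) (Fin n) K) : ((Fin n × Fin n) → K) →ₗ[F] K where
  toFun x := ∑ p, x p * A p.1 p.2
  map_add' x z := by simp [add_mul, Finset.sum_add_distrib]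
  map_smul' c x := by
    have hsm : ∀ (c : F) (a : K), c • a = (c : K) * a := fun _ _ => rfl
    simp [hsm, Finset.mul_sum, mul_assoc]

lemma pairA_apply {K : Type*} [Field K] (F : Subfield K) {n : ℕ}
    (A : Matrix (Fin n) (Fin n) K) (x : (Fin n × Fin n) → K) :
    pairA F A x = ∑ p, x p * A p.1 p.2 := rfl

theorem stmt0 {K : Type*} [Field K] [Algebra ℂ K] [CharZero K]
    (v : K → K)
    (hv_add : ∀ a b : K, v (a + b) = v a + v b)
    (hv_mul : ∀ a b : K, v (a * b) = v a * b + a * v b)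
    (hvC : ∀ c : ℂ, v (algebraMap ℂ K c) = 0)
    (k F : Subfield K) (hFk : F ≤ k)
    (hCF : ∀ c : ℂ, algebraMap ℂ K c ∈ F)
    (hvk : ∀ x ∈ k, v x ∈ k) (hvF : ∀ x ∈ F, v x ∈ F)
    (n : ℕ) (hn : 1 ≤ n) (G : Subgroup (GL (Fin n) ℂ))
    (y : Matrix (Fin n) (Fin n) K) (hy : IsUnit y)
    (A : Matrix (Fin n) (Fin n) K) (hA : ∀ i j, A i j ∈ k)
    (hyA : ∀ i j, v (y i j) = ∑ l, A i l * y l j)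
    (hQ : ∀ Q : MvPolynomial (Fin n × Fin n) ℂ, RTInvariant (Gtilde G) Q →
      aeval (fun p : Fin n × Fin n => y p.1 p.2) Q ∈ F) :
    ∃ B : Matrix (Fin n) (Fin n) K, (∀ i j, B i j ∈ F) ∧
      ∀ P : MvPolynomial (Fin n × Fin n) ℂ, RTInvariant (Gtilde G) P →
        ∑ ι, ∑ lam,
          (∑ κ, aeval (fun p : Fin n × Fin n => y p.1 p.2) (pderiv (ι, κ) P) * y lam κ) *
            (A ι lam - B ι lam) = 0 := by
  classical
  set y' : Fin n × Fin n → K := fun p => y p.1 p.2 with hy'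
  set L : MvPolynomial (Fin n × Fin n) ℂ → (Fin n × Fin n) → K :=
    fun P p => ∑ κ, aeval y' (pderiv (p.1, κ) P) * y p.2 κ with hLdef
  have hsm : ∀ (c : F) (a : K), c • a = (c : K) * a := fun _ _ => rfl
  -- `L P (ι, lam)` is the value at `y` of `Dop ι lam P`
  have hLDop : ∀ (P : MvPolynomial (Fin n × Fin n) ℂ) (ι lam : Fin n),
      aeval y' (Dop ι lam P) = L P (ι, lam) := by
    intro P ι lam
    rw [Dop, map_sum]
    exact Finset.sum_congr rfl fun κ _ => by rw [_root_.map_mul, aeval_X]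
  -- invariance is preserved by `Dop`
  have hDopInv : ∀ (P : MvPolynomial (Fin n × Fin n) ℂ), RTInvariant (Gtilde G) P →
      ∀ ι lam, RTInvariant (Gtilde G) (Dop ι lam P) := by
    intro P hP ι lam g hg
    rw [rt_Dop_comm, hP g hg]
  -- entries of `L P` lie in `F`
  have hLF : ∀ (P : MvPolynomial (Fin n × Fin n) ℂ), RTInvariant (Gtilde G) P →
      ∀ p : Fin n × Fin n, L P p ∈ F := by
    intro P hP p
    have := hQ (Dop p.1 p.2 P) (hDopInv P hP p.1 p.2)
    rwa [hLDop] at this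
  -- chain rule: pairing `L P` with `A` computes `v (P(y))`
  have hchain : ∀ P : MvPolynomial (Fin n × Fin n) ℂ,
      v (aeval y' P) = pairA F A (L P) := by
    intro P
    calc v (aeval y' P)
        = ∑ ι, ∑ κ, aeval y' (pderiv (ι, κ) P) * v (y ι κ) := by
          rw [chainRule v hv_add hv_mul hvC y' P, Fintype.sum_prod_type]
      _ = ∑ ι, ∑ κ, ∑ lam, aeval y' (pderiv (ι, κ) P) * (A ι lam * y lam κ) := by
          simp [hyA, Finset.mul_sum]
      _ = ∑ ι, ∑ lam, ∑ κ, aeval y' (pderiv (ι, κ) P) * (A ι lam * y lam κ) :=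
          Finset.sum_congr rfl fun ι _ => Finset.sum_comm
      _ = ∑ ι, ∑ lam, (∑ κ, aeval y' (pderiv (ι, κ) P) * y lam κ) * A ι lam := by
          refine Finset.sum_congr rfl fun ι _ => Finset.sum_congr rfl fun lam _ => ?_
          rw [Finset.sum_mul]
          exact Finset.sum_congr rfl fun κ _ => by ring
      _ = pairA F A (L P) := by rw [pairA_apply, Fintype.sum_prod_type]
  -- the span of the vectors `L P`
  set W : Submodule F ((Fin n × Fin n) → K) :=
    Submodule.span F {x | ∃ P, RTInvariant (Gtilde G) P ∧ L P = x} with hWdef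
  have hWF : ∀ w ∈ W, pairA F A w ∈ F := by
    intro w hw
    induction hw using Submodule.span_induction with
    | mem x hx =>
      obtain ⟨P, hP, rfl⟩ := hx
      rw [← hchain P]
      exact hvF _ (hQ P hP)
    | zero => rw [map_zero]; exact zero_mem F
    | add x z _ _ hx hz => rw [map_add]; exact add_mem hx hz
    | smul c x _ hx => rw [LinearMap.map_smul, hsm]; exact F.mul_mem c.2 hx
  -- extend the functional to the whole space with values in `F`
  let e : W →ₗ[F] F :=
    { toFun := fun w => ⟨pairA F A w, hWF w w.2⟩
      map_add' := fun a b => by ext; simp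
      map_smul' := fun c a => by ext; simp; rfl }
  obtain ⟨E, hE⟩ := LinearMap.exists_extend e
  have hEW : ∀ w ∈ W, (E w : K) = pairA F A w := by
    intro w hw
    have := congrArg (fun f => f ⟨w, hw⟩) hE
    simp only [LinearMap.comp_apply, Submodule.subtype_apply] at this
    rw [this]; rfl
  -- the matrix B
  refine ⟨fun ι lam => (E (Pi.single (ι, lam) (1 : K)) : K), fun i j => (E _).2, ?_⟩
  intro P hP
  -- decompose `L P` as an `F`-combination of standard basis vectors
  have hdec : L P = ∑ p, (⟨L P p, hLF P hP p⟩ : F) •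
      (Pi.single p (1 : K) : (Fin n × Fin n) → K) := by
    funext q
    rw [Finset.sum_apply]
    rw [Finset.sum_eq_single q
      (fun p _ hp => by rw [Pi.smul_apply, Pi.single_eq_of_ne' hp, smul_zero])
      (fun h => absurd (Finset.mem_univ q) h)]
    rw [Pi.smul_apply, Pi.single_eq_same, hsm, mul_one]
  have hLW : L P ∈ W := Submodule.subset_span ⟨P, hP, rfl⟩
  have hB : ∑ p : Fin n × Fin n, L P p * (E (Pi.single p (1 : K)) : K) = pairA F A (L P) := by
    rw [← hEW (L P) hLW]
    conv_rhs => rw [hdec]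
    rw [map_sum, AddSubmonoidClass.coe_finset_sum]
    refine Finset.sum_congr rfl fun p _ => ?_
    rw [LinearMap.map_smul, smul_eq_mul, MulMemClass.coe_mul]
  -- conclude
  have h1 : ∑ ι, ∑ lam, L P (ι, lam) * A ι lam = pairA F A (L P) := by
    rw [pairA_apply, Fintype.sum_prod_type]
  have h2 : ∑ ι, ∑ lam, L P (ι, lam) * (E (Pi.single ((ι, lam) : Fin n × Fin n) (1 : K)) : K)
      = pairA F A (L P) := by
    rw [← hB, Fintype.sum_prod_type]
  have goal' : ∑ ι, ∑ lam, L P (ι, lam)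
      * (A ι lam - (E (Pi.single ((ι, lam) : Fin n × Fin n) (1 : K)) : K)) = 0 := by
    simp only [mul_sub, Finset.sum_sub_distrib]
    rw [h1, h2, sub_self]
  exact goal'
end

section
/- Let n ≥ 1 and let G be a subgroup of GL_n(ℂ) acting on ℂ[X^i_j] by right translation. If P ∈ ℂ[X^i_j] is G-invariant, then for every pair of indices ι, λ ∈ {1,…,n} the polynomial Q^ι_λ := Σ_{κ=1}^n (∂P/∂X^ι_κ) · X^λ_κ is also G-invariant. -/
open MvPolynomial Matrix

lemma pderiv_rightTranslate {n : ℕ} (g : Matrix (Fin n) (Fin n) ℂ)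
    (ι κ : Fin n) (P : MvPolynomial (Fin n × Fin n) ℂ) :
    pderiv (ι, κ) (rightTranslate g P) =
      ∑ j, rightTranslate g (pderiv (ι, j) P) * C (g κ j) := by
  induction P using MvPolynomial.induction_on with
  | C a => simp
  | add p q hp hq => simp [map_add, hp, hq, Finset.sum_add_distrib, add_mul]
  | mul_X p q hp =>
    have hXq : pderiv (ι, κ) (rightTranslate g (X q))
        = if q.1 = ι then C (g κ q.2) else 0 := by
      rw [show rightTranslate g (X q) = ∑ l, X (q.1, l) * C (g l q.2) from aeval_X _ q,
        map_sum (pderiv (ι, κ))]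
      have : ∀ l : Fin n, pderiv (ι, κ) (X (q.1, l) * C (g l q.2))
          = if q.1 = ι ∧ l = κ then C (g l q.2) else 0 := by
        intro l
        rw [Derivation.leibniz]
        simp only [pderiv_X, pderiv_C, smul_eq_mul, mul_zero, add_zero, Pi.single_apply]
        by_cases h : (q.1, l) = (ι, κ)
        · simp only [Prod.mk.injEq] at h
          simp [h.1, h.2]
        · have h2 : ¬ (q.1 = ι ∧ l = κ) := fun hc => h (by simp [hc.1, hc.2])
          have h3 : ¬ ((q.1, l) = (ι, κ)) := h
          simp [h3, h2]
      simp only [this]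
      by_cases hq1 : q.1 = ι
      · simp [hq1]
      · simp [hq1]
    have hRTd : ∀ x : Fin n, rightTranslate g (pderiv (ι, x) (X q))
        = if q = (ι, x) then 1 else 0 := by
      intro x
      rw [pderiv_X, Pi.single_apply]
      by_cases h : q = (ι, x) <;> simp [h]
    rw [_root_.map_mul, Derivation.leibniz, smul_eq_mul, smul_eq_mul, hp, hXq]
    have key : ∀ x : Fin n, rightTranslate g (pderiv (ι, x) (p * X q)) * C (g κ x)
        = rightTranslate g p * (if q = (ι, x) then 1 else 0) * C (g κ x)
          + rightTranslate g (X q) * rightTranslate g (pderiv (ι, x) p) * C (g κ x) := by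
      intro x
      rw [Derivation.leibniz, smul_eq_mul, smul_eq_mul, map_add, _root_.map_mul,
        _root_.map_mul, hRTd x, add_mul]
    rw [Finset.sum_congr rfl (fun x _ => key x), Finset.sum_add_distrib]
    congr 1
    · by_cases hq1 : q.1 = ι
      · have hsum : ∀ x : Fin n,
            rightTranslate g p * (if q = (ι, x) then 1 else 0) * C (g κ x)
            = if x = q.2 then rightTranslate g p * C (g κ x) else 0 := by
          intro x
          by_cases h : q = (ι, x)
          · have hx : x = q.2 := by rw [h]
            rw [if_pos h, if_pos hx, mul_one]
          · have : ¬ x = q.2 := fun hc => h (by rw [Prod.ext_iff]; exact ⟨hq1, hc.symm⟩)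
            simp [h, this]
        rw [Finset.sum_congr rfl (fun x _ => hsum x),
          Finset.sum_ite_eq' Finset.univ q.2 (fun x => rightTranslate g p * C (g κ x))]
        simp only [Finset.mem_univ, if_true, hq1, if_pos]
      · have hsum : ∀ x : Fin n,
            rightTranslate g p * (if q = (ι, x) then 1 else 0) * C (g κ x) = 0 := by
          intro x
          have : ¬ q = (ι, x) := fun hc => hq1 (by rw [hc])
          simp [this]
        rw [Finset.sum_congr rfl (fun x _ => hsum x)]
        simp [hq1]
    · rw [Finset.mul_sum]
      exact Finset.sum_congr rfl fun x _ => by ring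

theorem stmt5 (n : ℕ) (hn : 1 ≤ n) (G : Subgroup (GL (Fin n) ℂ))
    (P : MvPolynomial (Fin n × Fin n) ℂ) (hP : RTInvariant G P)
    (ι lam : Fin n) :
    RTInvariant G (∑ κ, pderiv (ι, κ) P * X (lam, κ)) := by
  intro g hg
  set M : Matrix (Fin n) (Fin n) ℂ := ((g : GL (Fin n) ℂ) : Matrix (Fin n) (Fin n) ℂ)
  have hinv : rightTranslate M P = P := hP g hg
  calc rightTranslate M (∑ κ, pderiv (ι, κ) P * X (lam, κ))
      = ∑ κ, rightTranslate M (pderiv (ι, κ) P) * (∑ l, X (lam, l) * C (M l κ)) := by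
        rw [map_sum]
        refine Finset.sum_congr rfl fun κ _ => ?_
        rw [_root_.map_mul]
        congr 1
        exact aeval_X _ (lam, κ)
    _ = ∑ κ, ∑ l, rightTranslate M (pderiv (ι, κ) P) * C (M l κ) * X (lam, l) := by
        refine Finset.sum_congr rfl fun κ _ => ?_
        rw [Finset.mul_sum]
        refine Finset.sum_congr rfl fun l _ => ?_
        ring
    _ = ∑ l, (∑ κ, rightTranslate M (pderiv (ι, κ) P) * C (M l κ)) * X (lam, l) := by
        rw [Finset.sum_comm]
        simp [Finset.sum_mul]
    _ = ∑ l, pderiv (ι, l) P * X (lam, l) := by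
        refine Finset.sum_congr rfl fun l _ => ?_
        rw [← pderiv_rightTranslate M ι l P, hinv]
end

section
/- Let R be a commutative ring containing ℚ equipped with a derivation d : R → R. Let I be a proper ideal of R that is a differential ideal (i.e., d(I) ⊆ I) and is maximal among proper differential ideals of R with respect to inclusion. Then I is a prime ideal. -/
theorem stmt14 {R : Type*} [CommRing R] [Algebra ℚ R]
    (d : R → R)
    (hd_add : ∀ a b : R, d (a + b) = d a + d b)
    (hd_mul : ∀ a b : R, d (a * b) = d a * b + a * d b)
    (I : Ideal R) (hI : I ≠ ⊤) (hdI : ∀ x ∈ I, d x ∈ I)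
    (hmax : ∀ J : Ideal R, J ≠ ⊤ → (∀ x ∈ J, d x ∈ J) → I ≤ J → J = I) :
    I.IsPrime := by
  -- d 1 = 0
  have hd1 : d 1 = 0 := by
    have h := hd_mul 1 1
    simp only [one_mul, mul_one] at h
    exact left_eq_add.mp h
  -- derivative of powers
  have hd_pow : ∀ (n : ℕ) (x : R), d (x ^ (n + 1)) = ((n : R) + 1) * (x ^ n * d x) := by
    intro n
    induction n with
    | zero => intro x; simp [pow_one, pow_zero]
    | succ n ih =>
      intro x
      have : x ^ (n + 2) = x ^ (n + 1) * x := by ring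
      rw [this, hd_mul, ih]
      push_cast
      ring
  -- division by positive naturals
  have hdiv : ∀ (n : ℕ) (w : R) (J : Ideal R), ((n : R) + 1) * w ∈ J → w ∈ J := by
    intro n w J h
    have h1 : (algebraMap ℚ R) (((n : ℚ) + 1)⁻¹) * (((n : R) + 1) * w) = w := by
      rw [← mul_assoc]
      have h2 : ((n : R) + 1) = (algebraMap ℚ R) ((n : ℚ) + 1) := by
        push_cast
        simp
      rw [h2, ← map_mul]
      have h3 : ((n : ℚ) + 1) ≠ 0 := by positivity
      rw [inv_mul_cancel₀ h3, map_one, one_mul]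
    rw [← h1]
    exact J.mul_mem_left _ h
  -- key step
  have step : ∀ (m k : ℕ) (x : R), x ^ (m + 1) * d x ^ k ∈ I →
      x ^ m * d x ^ (k + 2) ∈ I := by
    intro m k x h
    have hy : d (x ^ (m + 1) * d x ^ k) ∈ I := hdI _ h
    have t2 : x ^ (m + 1) * d (d x ^ k) * d x ∈ I := by
      cases k with
      | zero => simp [pow_zero, hd1]
      | succ j =>
        have : x ^ (m + 1) * d (d x ^ (j + 1)) * d x
            = (((j : R) + 1) * d (d x)) * (x ^ (m + 1) * d x ^ (j + 1)) := by
          rw [hd_pow]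
          ring
        rw [this]
        exact I.mul_mem_left _ h
    have key : ((m : R) + 1) * (x ^ m * d x ^ (k + 2)) ∈ I := by
      have heq : ((m : R) + 1) * (x ^ m * d x ^ (k + 2))
          = d (x ^ (m + 1) * d x ^ k) * d x - x ^ (m + 1) * d (d x ^ k) * d x := by
        rw [hd_mul, hd_pow]
        ring
      rw [heq]
      exact I.sub_mem (I.mul_mem_right _ hy) t2
    exact hdiv m _ I key
  -- chain the step
  have chain : ∀ (m : ℕ) (x : R) (k : ℕ), x ^ m * d x ^ k ∈ I → d x ^ (k + 2 * m) ∈ I := by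
    intro m
    induction m with
    | zero =>
      intro x k h
      simpa using h
    | succ m ih =>
      intro x k h
      have h2 := step m k x h
      have := ih x (k + 2) h2
      have heq : k + 2 + 2 * m = k + 2 * (m + 1) := by ring
      rwa [heq] at this
  -- the radical of I is a differential ideal
  have hradd : ∀ x ∈ I.radical, d x ∈ I.radical := by
    intro x hx
    obtain ⟨n, hn⟩ := hx
    refine ⟨2 * n, ?_⟩
    have := chain n x 0 (by simpa using hn)
    simpa using this
  -- so I is radical
  have hradtop : I.radical ≠ ⊤ := by
    intro h
    exact hI (Ideal.radical_eq_top.mp h)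
  have hradeq : I.radical = I := hmax I.radical hradtop hradd Ideal.le_radical
  constructor
  · exact hI
  · intro a b hab
    by_contra hcon
    push_neg at hcon
    obtain ⟨ha, hb⟩ := hcon
    -- the colon ideal J = {x | x * a ∈ I}
    set J := I.colon (Ideal.span {a}) with hJ
    have hmem : ∀ x : R, x ∈ J ↔ x * a ∈ I := by
      intro x
      exact Ideal.mem_colon_span_singleton
    have hJtop : J ≠ ⊤ := by
      intro h
      apply ha
      have : (1 : R) ∈ J := h ▸ Submodule.mem_top
      simpa using (hmem 1).mp this
    have hJd : ∀ x ∈ J, d x ∈ J := by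
      intro x hx
      rw [hmem] at hx ⊢
      have h1 : d (x * a) ∈ I := hdI _ hx
      have h2 : (x * d a) * (d x * a) ∈ I := by
        have : (x * d a) * (d x * a) = (d a * d x) * (x * a) := by ring
        rw [this]
        exact I.mul_mem_left _ hx
      have h3 : (x * d a) ^ 2 ∈ I := by
        have heq : (x * d a) ^ 2 = (x * d a) * d (x * a) - (x * d a) * (d x * a) := by
          rw [hd_mul]
          ring
        rw [heq]
        exact I.sub_mem (I.mul_mem_left _ h1) h2
      have h4 : x * d a ∈ I := by
        rw [← hradeq]
        exact ⟨2, h3⟩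
      have h5 : d x * a = d (x * a) - x * d a := by
        rw [hd_mul]
        ring
      rw [h5]
      exact I.sub_mem h1 h4
    have hIJ : I ≤ J := by
      intro x hx
      rw [hmem]
      exact I.mul_mem_right _ hx
    have hJI : J = I := hmax J hJtop hJd hIJ
    apply hb
    rw [← hJI, hmem]
    rwa [mul_comm]
end
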